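/- Let (A₁,…,A_k) be a partition of a probability space X into positive measure sets, and let (e_{ij}) be a P-additive matrix with e_{ii} < 2μ(C₁) where C₁,…,C_k satisfy Cᵢ ⊆ Aᵢ and μ(C₁) = … = μ(C_k) > 0. Then there exists a partition (B₁,…,B_k) of X with μ(Bᵢ) = μ(Aᵢ), μ(Bᵢ Δ A_j) = e_{ij} for all i, j, and moreover Bᵢ ∩ A_j ⊆ C_j for i ≠ j, and Aᵢ \ Bᵢ ⊆ Cᵢ for each i. -/

import Mathlib

open MeasureTheory
open scoped ENNReal

lemma pieces_lemma {X : Type*} [MeasurableSpace X] (μ : Measure X)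
    (hdiv : ∀ (s : Set X) (r : ENNReal), MeasurableSet s → r ≤ μ s →
      ∃ t ⊆ s, MeasurableSet t ∧ μ t = r) :
    ∀ (n : ℕ) (s : Set X), MeasurableSet s → μ s ≠ ∞ →
      ∀ (r : Fin n → ENNReal), (∑ j, r j) ≤ μ s →
      ∃ T : Fin n → Set X, (∀ j, MeasurableSet (T j)) ∧ (∀ j, T j ⊆ s) ∧
        Pairwise (Function.onFun Disjoint T) ∧ ∀ j, μ (T j) = r j := by
  intro n
  induction n with
  | zero =>
    intro s hs hfin r hr
    exact ⟨fun _ => ∅, fun j => j.elim0, fun j => j.elim0, fun j => j.elim0,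
      fun j => j.elim0⟩
  | succ n ih =>
    intro s hs hfin r hr
    have hr0 : r 0 ≤ μ s := by
      refine le_trans ?_ hr
      exact Finset.single_le_sum (fun i _ => zero_le) (Finset.mem_univ 0)
    obtain ⟨T0, hT0s, hT0m, hT0μ⟩ := hdiv s (r 0) hs hr0
    have hdm : MeasurableSet (s \ T0) := hs.diff hT0m
    have hdμ : μ (s \ T0) = μ s - r 0 := by
      rw [measure_diff hT0s hT0m.nullMeasurableSet (by rw [hT0μ]; exact lt_of_le_of_lt hr0 (lt_top_iff_ne_top.2 hfin) |>.ne), hT0μ]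
    have hsum : (∑ j, r (Fin.succ j)) ≤ μ (s \ T0) := by
      rw [hdμ]
      refine ENNReal.le_sub_of_add_le_left (lt_of_le_of_lt hr0 (lt_top_iff_ne_top.2 hfin)).ne ?_
      rw [← Fin.sum_univ_succ r]
      exact hr
    obtain ⟨T', hT'm, hT's, hT'd, hT'μ⟩ := ih (s \ T0) hdm
      (by rw [hdμ]; exact (tsub_le_self.trans_lt (lt_top_iff_ne_top.2 hfin)).ne)
      (fun j => r (Fin.succ j)) hsum
    refine ⟨Fin.cons T0 T', ?_, ?_, ?_, ?_⟩
    · exact Fin.cases hT0m hT'm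
    · exact Fin.cases hT0s (fun j => (hT's j).trans Set.diff_subset)
    · intro i j hij
      induction i using Fin.cases with
      | zero =>
        induction j using Fin.cases with
        | zero => exact absurd rfl hij
        | succ j' =>
          simp only [Function.onFun, Fin.cons_zero, Fin.cons_succ]
          exact Set.disjoint_left.2 fun x hx hx' => ((hT's j') hx').2 hx
      | succ i' =>
        induction j using Fin.cases with
        | zero =>
          simp only [Function.onFun, Fin.cons_zero, Fin.cons_succ]
          exact Set.disjoint_right.2 fun x hx hx' => ((hT's i') hx').2 hx
        | succ j' =>
          simp only [Function.onFun, Fin.cons_succ]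
          exact hT'd (fun h => hij (congrArg Fin.succ h))
    · exact Fin.cases hT0μ hT'μ


/-- Realization of a `P`-additive matrix: given a partition `(A i)` of a standard
probability space into positive-measure sets, sets `C i ⊆ A i` of equal positive
measure, and a `P`-additive matrix `e` with `e i i < 2 μ(C 0)`, there is a partition
`(B i)` with `μ(B i) = μ(A i)`, `μ(B i Δ A j) = e i j`, `B i ∩ A j ⊆ C j` for `i ≠ j`,
and `A i \ B i ⊆ C i`. -/
theorem realize_additive_matrix {X : Type*} [MeasurableSpace X] (μ : Measure X)
    [IsProbabilityMeasure μ]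
    (hdiv : ∀ (s : Set X) (r : ENNReal), MeasurableSet s → r ≤ μ s →
      ∃ t ⊆ s, MeasurableSet t ∧ μ t = r)
    (k : ℕ) [NeZero k] (A : Fin k → Set X) (hAmeas : ∀ i, MeasurableSet (A i))
    (hAdisj : Pairwise (Function.onFun Disjoint A)) (hAcover : ⋃ i, A i = Set.univ)
    (hApos : ∀ i, 0 < μ (A i))
    (e : Fin k → Fin k → ℝ)
    (he1 : ∀ i j, 0 ≤ e i j)
    (he2 : ∀ i j, e i j ≤ (μ (A i)).toReal + (μ (A j)).toReal)
    (he3 : ∀ i, e i i =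
      ∑ j ∈ Finset.univ.erase i, ((μ (A i)).toReal + (μ (A j)).toReal - e i j))
    (he4 : ∀ i, e i i =
      ∑ j ∈ Finset.univ.erase i, ((μ (A i)).toReal + (μ (A j)).toReal - e j i))
    (C : Fin k → Set X) (hCmeas : ∀ i, MeasurableSet (C i))
    (hCsub : ∀ i, C i ⊆ A i) (hCpos : 0 < μ (C 0))
    (hCeq : ∀ i j, μ (C i) = μ (C j))
    (hee : ∀ i, e i i < 2 * (μ (C 0)).toReal) :
    ∃ B : Fin k → Set X, (∀ i, MeasurableSet (B i)) ∧
      Pairwise (Function.onFun Disjoint B) ∧ (⋃ i, B i = Set.univ) ∧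
      (∀ i, μ (B i) = μ (A i)) ∧
      (∀ i j, (μ (symmDiff (B i) (A j))).toReal = e i j) ∧
      (∀ i j, i ≠ j → B i ∩ A j ⊆ C j) ∧
      (∀ i, A i \ B i ⊆ C i) := by
  classical
  have hAfin : ∀ i, μ (A i) ≠ ∞ := fun i => measure_ne_top μ _
  set t : Fin k → Fin k → ℝ :=
    fun j m => if j = m then 0 else ((μ (A j)).toReal + (μ (A m)).toReal - e j m) / 2 with ht
  have htnn : ∀ j m, 0 ≤ t j m := by
    intro j m
    simp only [ht]
    split
    · exact le_refl 0
    · have := he2 j m; linarith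
  set r : Fin k → Fin k → ℝ≥0∞ := fun j m => ENNReal.ofReal (t j m) with hrdef
  have htreal : ∀ j m, (r j m).toReal = t j m := fun j m => ENNReal.toReal_ofReal (htnn j m)
  have hcol : ∀ m, ∑ j, t j m = e m m / 2 := by
    intro m
    rw [← Finset.add_sum_erase _ _ (Finset.mem_univ m)]
    have h0 : t m m = 0 := by simp [ht]
    have h1 : ∑ j ∈ Finset.univ.erase m, t j m
        = (∑ j ∈ Finset.univ.erase m, ((μ (A m)).toReal + (μ (A j)).toReal - e j m)) / 2 := by
      rw [Finset.sum_div]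
      refine Finset.sum_congr rfl fun j hj => ?_
      have hjm : j ≠ m := Finset.ne_of_mem_erase hj
      simp only [ht, if_neg hjm]
      ring
    rw [h0, h1, ← he4 m, zero_add]
  have hrow : ∀ j, ∑ m, t j m = e j j / 2 := by
    intro j
    rw [← Finset.add_sum_erase _ _ (Finset.mem_univ j)]
    have h0 : t j j = 0 := by simp [ht]
    have h1 : ∑ m ∈ Finset.univ.erase j, t j m
        = (∑ m ∈ Finset.univ.erase j, ((μ (A j)).toReal + (μ (A m)).toReal - e j m)) / 2 := by
      rw [Finset.sum_div]
      refine Finset.sum_congr rfl fun m hm => ?_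
      have hmj : j ≠ m := fun h => Finset.ne_of_mem_erase hm h.symm
      simp only [ht, if_neg hmj]
    rw [h0, h1, ← he3 j, zero_add]
  have hrsum_col : ∀ m, ∑ j, r j m = ENNReal.ofReal (e m m / 2) := by
    intro m
    rw [← hcol m, ENNReal.ofReal_sum_of_nonneg (fun j _ => htnn j m)]
  have hrsum_row : ∀ j, ∑ m, r j m = ENNReal.ofReal (e j j / 2) := by
    intro j
    rw [← hrow j, ENNReal.ofReal_sum_of_nonneg (fun m _ => htnn j m)]
  have hSle : ∀ m, ENNReal.ofReal (e m m / 2) ≤ μ (C m) := by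
    intro m
    apply ENNReal.ofReal_le_of_le_toReal
    rw [hCeq m 0]
    linarith [hee m]
  obtain ⟨P, hPmeas, hPsub, hPdisj, hPμ⟩ : ∃ P : Fin k → Fin k → Set X,
      (∀ m j, MeasurableSet (P m j)) ∧ (∀ m j, P m j ⊆ C m) ∧
      (∀ m, Pairwise (Function.onFun Disjoint (P m))) ∧ (∀ m j, μ (P m j) = r j m) := by
    have key := fun m => pieces_lemma μ hdiv k (C m) (hCmeas m) (measure_ne_top μ _)
      (fun j => r j m) (by simpa using (hrsum_col m).le.trans (hSle m))
    choose P h1 h2 h3 h4 using key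
    exact ⟨P, h1, h2, h3, h4⟩
  set U : Fin k → Set X := fun j => ⋃ l, P j l with hUdef
  set V : Fin k → Set X := fun j => ⋃ m, P m j with hVdef
  set B : Fin k → Set X := fun j => (A j \ U j) ∪ V j with hBdef
  have hBj : ∀ j, B j = (A j \ U j) ∪ V j := fun _ => rfl
  have hUj : ∀ j, U j = ⋃ l, P j l := fun _ => rfl
  have hVj : ∀ j, V j = ⋃ m, P m j := fun _ => rfl
  have hPA : ∀ m j, P m j ⊆ A m := fun m j => (hPsub m j).trans (hCsub m)
  have hforce : ∀ {x : X} {m m' : Fin k}, x ∈ A m → x ∈ A m' → m = m' := by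
    intro x m m' hx hx'
    by_contra h
    exact Set.disjoint_left.1 (hAdisj h) hx hx'
  have hUsub : ∀ j, U j ⊆ C j := fun j => Set.iUnion_subset (fun l => hPsub j l)
  have hUmeas : ∀ j, MeasurableSet (U j) := fun j => MeasurableSet.iUnion (fun l => hPmeas j l)
  have hVmeas : ∀ j, MeasurableSet (V j) := fun j => MeasurableSet.iUnion (fun m => hPmeas m j)
  have hBmeas : ∀ j, MeasurableSet (B j) := fun j => ((hAmeas j).diff (hUmeas j)).union (hVmeas j)
  have hUμ : ∀ j, μ (U j) = ENNReal.ofReal (e j j / 2) := by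
    intro j
    rw [hUj, measure_iUnion ?_ (fun l => hPmeas j l)]
    · rw [tsum_fintype]
      simp only [hPμ]
      exact hrsum_col j
    · exact hPdisj j
  have hVμ : ∀ j, μ (V j) = ENNReal.ofReal (e j j / 2) := by
    intro j
    rw [hVj, measure_iUnion ?_ (fun m => hPmeas m j)]
    · rw [tsum_fintype]
      simp only [hPμ]
      exact hrsum_row j
    · intro m m' hmm'
      exact Set.disjoint_left.2 fun x hx hx' => hmm' (hforce (hPA m j hx) (hPA m' j hx'))
  have hSleA : ∀ j, ENNReal.ofReal (e j j / 2) ≤ μ (A j) :=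
    fun j => (hSle j).trans (measure_mono (hCsub j))
  have hdiffμ : ∀ j, μ (A j \ U j) = μ (A j) - ENNReal.ofReal (e j j / 2) := by
    intro j
    rw [measure_diff ((hUsub j).trans (hCsub j)) (hUmeas j).nullMeasurableSet
      (by rw [hUμ j]; exact ((hSleA j).trans_lt (lt_top_iff_ne_top.2 (hAfin j))).ne), hUμ j]
  have hBμ : ∀ j, μ (B j) = μ (A j) := by
    intro j
    have hd : Disjoint (A j \ U j) (V j) := by
      rw [Set.disjoint_left]
      intro x hx hxV
      obtain ⟨m, hm⟩ := Set.mem_iUnion.1 hxV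
      by_cases hmj : m = j
      · subst hmj
        exact hx.2 (Set.mem_iUnion.2 ⟨_, hm⟩)
      · exact hmj (hforce (hPA m j hm) hx.1)
    rw [hBj j, measure_union hd (hVmeas j), hdiffμ j, hVμ j,
      tsub_add_cancel_of_le (hSleA j)]
  have hBAne : ∀ j m, j ≠ m → B j ∩ A m = P m j := by
    intro j m hjm
    ext x
    constructor
    · rintro ⟨hxB, hxA⟩
      rcases hxB with h | h
      · exact absurd (hforce h.1 hxA) hjm
      · obtain ⟨m', hm'⟩ := Set.mem_iUnion.1 h
        have hm'm : m' = m := hforce (hPA m' j hm') hxA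
        rw [← hm'm]; exact hm'
    · intro hx
      exact ⟨Or.inr (Set.mem_iUnion.2 ⟨m, hx⟩), hPA m j hx⟩
  have hBAj : ∀ j, B j ∩ A j = (A j \ U j) ∪ P j j := by
    intro j
    ext x
    constructor
    · rintro ⟨hxB, hxA⟩
      rcases hxB with h | h
      · exact Or.inl h
      · obtain ⟨m, hm⟩ := Set.mem_iUnion.1 h
        have hmj : m = j := hforce (hPA m j hm) hxA
        exact Or.inr (hmj ▸ hm)
    · rintro (h | h)
      · exact ⟨Or.inl h, h.1⟩
      · exact ⟨Or.inr (Set.mem_iUnion.2 ⟨j, h⟩), hPA j j h⟩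
  have hPjj0 : ∀ j, μ (P j j) = 0 := by
    intro j
    rw [hPμ]
    simp [hrdef, ht]
  have hBAμ : ∀ j m, (μ (B j ∩ A m)).toReal =
      if j = m then (μ (A j)).toReal - e j j / 2 else t j m := by
    intro j m
    by_cases hjm : j = m
    · subst hjm
      have hmuP : μ ((A j \ U j) ∪ P j j) = μ (A j \ U j) :=
        le_antisymm ((measure_union_le _ _).trans_eq (by rw [hPjj0 j, add_zero]))
          (measure_mono Set.subset_union_left)
      rw [if_pos rfl, hBAj j, hmuP, hdiffμ j,
        ENNReal.toReal_sub_of_le (hSleA j) (hAfin j),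
        ENNReal.toReal_ofReal (by linarith [he1 j j])]
    · rw [if_neg hjm, hBAne j m hjm, hPμ, htreal]
  have hsymm : ∀ j m, (μ (symmDiff (B j) (A m))).toReal =
      (μ (A j)).toReal + (μ (A m)).toReal - 2 * (μ (B j ∩ A m)).toReal := by
    intro j m
    have h1 : μ (B j ∩ A m) + μ (B j \ A m) = μ (B j) := measure_inter_add_diff _ (hAmeas m)
    have h2 : μ (A m ∩ B j) + μ (A m \ B j) = μ (A m) := measure_inter_add_diff _ (hBmeas j)
    have hμd : μ (symmDiff (B j) (A m)) = μ (B j \ A m) + μ (A m \ B j) := by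
      rw [Set.symmDiff_def]
      exact measure_union disjoint_sdiff_sdiff ((hAmeas m).diff (hBmeas j))
    have e1 : (μ (B j ∩ A m)).toReal + (μ (B j \ A m)).toReal = (μ (B j)).toReal := by
      rw [← ENNReal.toReal_add (measure_ne_top μ _) (measure_ne_top μ _), h1]
    have e2 : (μ (A m ∩ B j)).toReal + (μ (A m \ B j)).toReal = (μ (A m)).toReal := by
      rw [← ENNReal.toReal_add (measure_ne_top μ _) (measure_ne_top μ _), h2]
    have hint : (μ (A m ∩ B j)).toReal = (μ (B j ∩ A m)).toReal := by rw [Set.inter_comm]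
    have hBA : (μ (B j)).toReal = (μ (A j)).toReal := by rw [hBμ j]
    rw [hμd, ENNReal.toReal_add (measure_ne_top μ _) (measure_ne_top μ _)]
    rw [hBA] at e1
    rw [hint] at e2
    linarith
  have goal5 : ∀ i j, (μ (symmDiff (B i) (A j))).toReal = e i j := by
    intro i j
    rw [hsymm i j, hBAμ i j]
    by_cases hij : i = j
    · subst hij
      rw [if_pos rfl]
      ring
    · rw [if_neg hij]
      simp only [ht, if_neg hij]
      ring
  have hBdisj : Pairwise (Function.onFun Disjoint B) := by
    intro j j' hjj'
    rw [Function.onFun, Set.disjoint_left]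
    intro x hx hx'
    have hxA : x ∈ ⋃ i, A i := hAcover.symm ▸ Set.mem_univ x
    obtain ⟨m, hm⟩ := Set.mem_iUnion.1 hxA
    by_cases hmj : m = j
    · subst hmj
      have hx1 : x ∈ (A m \ U m) ∪ P m m := by
        rw [← hBAj m]; exact ⟨hx, hm⟩
      have hx2 : x ∈ P m j' := by
        rw [← hBAne j' m (Ne.symm hjj')]; exact ⟨hx', hm⟩
      rcases hx1 with h | h
      · exact h.2 (Set.mem_iUnion.2 ⟨j', hx2⟩)
      · exact Set.disjoint_left.1 (hPdisj m hjj') h hx2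
    · by_cases hmj' : m = j'
      · subst hmj'
        have hx1 : x ∈ (A m \ U m) ∪ P m m := by
          rw [← hBAj m]; exact ⟨hx', hm⟩
        have hx2 : x ∈ P m j := by
          rw [← hBAne j m (fun h => hmj h.symm)]; exact ⟨hx, hm⟩
        rcases hx1 with h | h
        · exact h.2 (Set.mem_iUnion.2 ⟨j, hx2⟩)
        · exact Set.disjoint_left.1 (hPdisj m (Ne.symm hjj')) h hx2
      · have hx1 : x ∈ P m j := by
          rw [← hBAne j m (fun h => hmj h.symm)]; exact ⟨hx, hm⟩
        have hx2 : x ∈ P m j' := by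
          rw [← hBAne j' m (fun h => hmj' h.symm)]; exact ⟨hx', hm⟩
        exact Set.disjoint_left.1 (hPdisj m hjj') hx1 hx2
  have hBcover : ⋃ j, B j = Set.univ := by
    apply Set.eq_univ_of_forall
    intro x
    have hxA : x ∈ ⋃ i, A i := hAcover.symm ▸ Set.mem_univ x
    obtain ⟨m, hm⟩ := Set.mem_iUnion.1 hxA
    by_cases hxU : x ∈ U m
    · obtain ⟨l, hl⟩ := Set.mem_iUnion.1 hxU
      exact Set.mem_iUnion.2 ⟨l, Or.inr (Set.mem_iUnion.2 ⟨m, hl⟩)⟩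
    · exact Set.mem_iUnion.2 ⟨m, Or.inl ⟨hm, hxU⟩⟩
  have goal6 : ∀ i j, i ≠ j → B i ∩ A j ⊆ C j := by
    intro i j hij
    rw [hBAne i j hij]
    exact hPsub j i
  have goal7 : ∀ i, A i \ B i ⊆ C i := by
    intro i x hx
    by_cases hxU : x ∈ U i
    · exact hUsub i hxU
    · exact absurd (Or.inl ⟨hx.1, hxU⟩) hx.2
  exact ⟨B, hBmeas, hBdisj, hBcover, hBμ, goal5, goal6, goal7⟩
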